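/- Let X be a finite nonempty set, U a distribution on X with U(x) > 0 for all x, q_1, …, q_t : X → [0,1] statistical queries, a_1, …, a_t ∈ ℝ, and λ = (λ_1, …, λ_t) ∈ ℝ^t. Then the minimum over all distributions D on X of the partial Lagrangian KL(D‖U) + Σ_{i=1}^t λ_i (q_i(D) − a_i) equals −log( Σ_{x∈X} U(x) exp(−Σ_{i=1}^t λ_i (q_i(x) − a_i)) ), and it is attained at the unique distribution D_λ(x) = U(x) exp(−Σ_{i=1}^t λ_i q_i(x)) / Z_λ, where Z_λ = Σ_{x'∈X} U(x') exp(−Σ_{i=1}^t λ_i q_i(x')). -/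

import Mathlib

lemma pt_kl (d p : ℝ) (hd : 0 ≤ d) (hp : 0 < p) :
    d - p ≤ d * Real.log (d / p) ∧ (d * Real.log (d / p) = d - p → d = p) := by
  rcases eq_or_lt_of_le hd with h | h
  · constructor
    · simp [← h]; linarith
    · intro he; simp [← h] at he ⊢; linarith
  · have hdp : 0 < p / d := div_pos hp h
    have hlog : Real.log (d / p) = - Real.log (p / d) := by
      rw [← Real.log_inv, inv_div]
    have hdp' : d * (p / d) = p := by field_simp
    constructor
    · have h1 : Real.log (p / d) ≤ p / d - 1 := Real.log_le_sub_one_of_pos hdp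
      have := mul_le_mul_of_nonneg_left h1 hd
      rw [hlog]; nlinarith
    · intro he
      by_contra hne
      have hne1 : p / d ≠ 1 := by
        intro h1'
        rw [div_eq_one_iff_eq h.ne'] at h1'
        exact hne h1'.symm
      have h2 : Real.log (p / d) < p / d - 1 := Real.log_lt_sub_one_of_pos hdp hne1
      have := mul_lt_mul_of_pos_left h2 h
      rw [hlog] at he; nlinarith

lemma gibbs_aux {X : Type*} [Fintype X] (D P : X → ℝ)
    (hD : ∀ x, 0 ≤ D x) (hP : ∀ x, 0 < P x)
    (hDs : ∑ x, D x = 1) (hPs : ∑ x, P x = 1) :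
    0 ≤ ∑ x, D x * Real.log (D x / P x) ∧
    (∑ x, D x * Real.log (D x / P x) = 0 → D = P) := by
  have key : ∀ x, D x - P x ≤ D x * Real.log (D x / P x) :=
    fun x => (pt_kl _ _ (hD x) (hP x)).1
  have hsum : ∑ x, (D x - P x) ≤ ∑ x, D x * Real.log (D x / P x) :=
    Finset.sum_le_sum (fun x _ => key x)
  rw [Finset.sum_sub_distrib, hDs, hPs] at hsum
  constructor
  · linarith
  · intro heq
    have hzero : ∑ x, (D x * Real.log (D x / P x) - (D x - P x)) = 0 := by
      rw [Finset.sum_sub_distrib, heq, Finset.sum_sub_distrib, hDs, hPs]; ring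
    have hall := (Finset.sum_eq_zero_iff_of_nonneg
      (fun x _ => by have := key x; linarith : ∀ x ∈ Finset.univ,
        0 ≤ D x * Real.log (D x / P x) - (D x - P x))).mp hzero
    funext x
    have hx := hall x (Finset.mem_univ x)
    exact (pt_kl _ _ (hD x) (hP x)).2 (by linarith)

theorem pep_partial_lagrangian_minimizer
    {X : Type*} [Fintype X] [Nonempty X]
    (U : X → ℝ) (hU0 : ∀ x, 0 < U x) (hU1 : ∑ x, U x = 1)
    (t : ℕ) (q : Fin t → X → ℝ) (hq : ∀ i x, q i x ∈ Set.Icc (0 : ℝ) 1)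
    (a : Fin t → ℝ) (lam : Fin t → ℝ)
    (KL : (X → ℝ) → (X → ℝ) → ℝ)
    (hKL : ∀ D V : X → ℝ, KL D V = ∑ x, D x * Real.log (D x / V x))
    (L : (X → ℝ) → ℝ)
    (hL : ∀ D : X → ℝ,
      L D = KL D U + ∑ i, lam i * ((∑ x, q i x * D x) - a i))
    (Z : ℝ) (hZ : Z = ∑ x', U x' * Real.exp (-∑ i, lam i * q i x'))
    (Dlam : X → ℝ)
    (hDlam : ∀ x, Dlam x = U x * Real.exp (-∑ i, lam i * q i x) / Z) :
    (∀ x, 0 ≤ Dlam x) ∧ (∑ x, Dlam x = 1) ∧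
    (L Dlam = -Real.log (∑ x, U x * Real.exp (-∑ i, lam i * (q i x - a i)))) ∧
    (∀ D : X → ℝ, (∀ x, 0 ≤ D x) → (∑ x, D x = 1) → L Dlam ≤ L D) ∧
    (∀ D : X → ℝ, (∀ x, 0 ≤ D x) → (∑ x, D x = 1) → L D = L Dlam → D = Dlam) := by
  have hZpos : 0 < Z := by
    rw [hZ]
    exact Finset.sum_pos (fun x _ => mul_pos (hU0 x) (Real.exp_pos _))
      Finset.univ_nonempty
  have hDpos : ∀ x, 0 < Dlam x := fun x => by
    rw [hDlam]; exact div_pos (mul_pos (hU0 x) (Real.exp_pos _)) hZpos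
  have hDsum : ∑ x, Dlam x = 1 := by
    simp only [hDlam]
    rw [← Finset.sum_div, ← hZ, div_self hZpos.ne']
  set C : ℝ := ∑ i, lam i * a i with hC
  -- key identity
  have hLform : ∀ D : X → ℝ, (∀ x, 0 ≤ D x) → (∑ x, D x = 1) →
      L D = (∑ x, D x * Real.log (D x / Dlam x)) - Real.log Z - C := by
    intro D hD0 hD1
    have hswap : ∑ i, lam i * (∑ x, q i x * D x) = ∑ x, (∑ i, lam i * q i x) * D x := by
      simp_rw [Finset.mul_sum, Finset.sum_mul, mul_assoc]
      exact Finset.sum_comm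
    have hterm : ∀ x, D x * Real.log (D x / U x) + (∑ i, lam i * q i x) * D x
        = D x * Real.log (D x / Dlam x) - D x * Real.log Z := by
      intro x
      rcases eq_or_lt_of_le (hD0 x) with h | h
      · simp [← h]
      · have hUx := hU0 x
        have hDx := hDpos x
        have h2 : Real.log (Dlam x / U x) = (-∑ i, lam i * q i x) - Real.log Z := by
          have : Dlam x / U x = Real.exp (-∑ i, lam i * q i x) / Z := by
            rw [hDlam]; field_simp
          rw [this, Real.log_div (Real.exp_ne_zero _) hZpos.ne', Real.log_exp]
        have h1 : Real.log (D x / U x)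
            = Real.log (D x / Dlam x) + Real.log (Dlam x / U x) := by
          rw [← Real.log_mul (by positivity) (by positivity),
            div_mul_div_comm]
          congr 1
          field_simp
        rw [h1, h2]; ring
    rw [hL, hKL]
    have hexp : ∑ i, lam i * ((∑ x, q i x * D x) - a i)
        = (∑ x, (∑ i, lam i * q i x) * D x) - C := by
      rw [← hswap]
      simp [mul_sub, Finset.sum_sub_distrib, hC]
    rw [hexp, ← add_sub_assoc, ← Finset.sum_add_distrib]
    have : ∑ x, (D x * Real.log (D x / U x) + (∑ i, lam i * q i x) * D x)
        = ∑ x, (D x * Real.log (D x / Dlam x) - D x * Real.log Z) := by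
      exact Finset.sum_congr rfl (fun x _ => hterm x)
    rw [this, Finset.sum_sub_distrib, ← Finset.sum_mul, hD1]
    ring
  have hLDlam : L Dlam = - Real.log Z - C := by
    rw [hLform Dlam (fun x => (hDpos x).le) hDsum]
    have : ∀ x, Dlam x * Real.log (Dlam x / Dlam x) = 0 := by
      intro x; rw [div_self (hDpos x).ne']; simp
    simp only [this, Finset.sum_const_zero]; ring
  have hRHS : (∑ x, U x * Real.exp (-∑ i, lam i * (q i x - a i)))
      = Z * Real.exp C := by
    rw [hZ, Finset.sum_mul]
    apply Finset.sum_congr rfl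
    intro x _
    have harg : -∑ i, lam i * (q i x - a i) = (-∑ i, lam i * q i x) + C := by
      simp only [mul_sub, Finset.sum_sub_distrib, hC]; ring
    rw [harg, Real.exp_add, mul_assoc]
  refine ⟨fun x => (hDpos x).le, hDsum, ?_, ?_, ?_⟩
  · rw [hLDlam, hRHS, Real.log_mul hZpos.ne' (Real.exp_ne_zero _), Real.log_exp]
    ring
  · intro D hD0 hD1
    rw [hLDlam, hLform D hD0 hD1]
    have := (gibbs_aux D Dlam hD0 hDpos hD1 hDsum).1
    linarith
  · intro D hD0 hD1 hEq
    rw [hLDlam, hLform D hD0 hD1] at hEq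
    exact (gibbs_aux D Dlam hD0 hDpos hD1 hDsum).2 (by linarith)
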